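/- Let $N \geq 2$, $K \geq 1$ be integers and $0 \leq r \leq 1$. Define the region $\mathcal{R} = \{(r_1,\ldots,r_K) : 0 \leq r_k \leq 1 \text{ for all } k, \ N\sum_{k=1}^{K-1} r_k + (N-1) r_K \leq NKr\}$ and the objective $l(\mathbf{r}) = K - \sum_{k=1}^K r_k$. Then $\min_{\mathbf{r} \in \mathcal{R}} l(\mathbf{r}) = \max\{0,\ K(1-r) - 1/N,\ K(1-r) - Kr/(N-1)\}$. -/

import Mathlib

open Finset

set_option maxHeartbeats 1000000 in
theorem stmt0 (N K : ℕ) (hN : 2 ≤ N) (hK : 1 ≤ K) (r : ℝ) (hr0 : 0 ≤ r) (hr1 : r ≤ 1) :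
    IsLeast
      {x : ℝ | ∃ v : Fin K → ℝ,
        (∀ k, 0 ≤ v k ∧ v k ≤ 1) ∧
        (N : ℝ) * (∑ k ∈ Finset.univ.erase (⟨K - 1, by omega⟩ : Fin K), v k) +
          ((N : ℝ) - 1) * v ⟨K - 1, by omega⟩ ≤ (N : ℝ) * K * r ∧
        x = (K : ℝ) - ∑ k, v k}
      (max 0 (max ((K : ℝ) * (1 - r) - 1 / N) ((K : ℝ) * (1 - r) - (K : ℝ) * r / ((N : ℝ) - 1)))) := by
  have hN2 : (2:ℝ) ≤ (N:ℝ) := by exact_mod_cast hN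
  have hNpos : (0:ℝ) < (N:ℝ) := by linarith
  have hN1 : (0:ℝ) < (N:ℝ) - 1 := by linarith
  have hK1 : (1:ℝ) ≤ (K:ℝ) := by exact_mod_cast hK
  have hNN : (N:ℝ) * (1/N) = 1 := by field_simp
  set L : Fin K := ⟨K - 1, by omega⟩ with hLdef
  have hcardn : (Finset.univ.erase L).card = K - 1 := by
    rw [Finset.card_erase_of_mem (mem_univ L)]; simp
  have hcard : ((Finset.univ.erase L).card : ℝ) = (K:ℝ) - 1 := by
    rw [hcardn, Nat.cast_sub hK]; norm_num
  constructor
  · -- membership: the max is attained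
    rcases le_or_gt ((N:ℝ)*K*r) ((N:ℝ)-1) with hA | hA
    · -- case A : put all mass on L
      refine ⟨fun k => if k = L then (N:ℝ)*K*r/((N:ℝ)-1) else 0, ?_, ?_, ?_⟩
      · intro k
        by_cases h : k = L <;> simp [h]
        constructor
        · positivity
        · rw [div_le_one hN1]; linarith
      · have h1 : (∑ k ∈ Finset.univ.erase L, (if k = L then (N:ℝ)*K*r/((N:ℝ)-1) else 0)) = 0 :=
          Finset.sum_eq_zero (fun k hk => if_neg (Finset.ne_of_mem_erase hk))
        rw [h1]
        have h2 : ((N:ℝ)-1) * ((N:ℝ)*K*r/((N:ℝ)-1)) = (N:ℝ)*K*r := by field_simp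
        have h3 : (fun k => if k = L then (N:ℝ)*K*r/((N:ℝ)-1) else 0) L = (N:ℝ)*K*r/((N:ℝ)-1) := if_pos rfl
        rw [h3, mul_zero, zero_add, h2]
      · have h2 : (∑ k, (if k = L then (N:ℝ)*K*r/((N:ℝ)-1) else 0)) = (N:ℝ)*K*r/((N:ℝ)-1) := by
          simp
        rw [h2]
        have hba : (K : ℝ) * (1 - r) - 1 / N ≤ (K : ℝ) * (1 - r) - (K:ℝ)*r/((N:ℝ)-1) := by
          have : (K:ℝ)*r/((N:ℝ)-1) ≤ 1/N := by
            rw [div_le_div_iff₀ hN1 hNpos]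
            nlinarith
          linarith
        have h0b : (0:ℝ) ≤ (K : ℝ) * (1 - r) - (K:ℝ)*r/((N:ℝ)-1) := by
          rw [sub_nonneg, div_le_iff₀ hN1]
          nlinarith
        rw [max_eq_right hba, max_eq_right h0b]
        field_simp
        ring
    · rcases le_or_gt ((N:ℝ)*K*r) ((N:ℝ)*K - 1) with hB | hB
      · -- case B : v L = 1, others uniform
        have hK2 : (2:ℝ) ≤ (K:ℝ) := by
          by_contra h
          push_neg at h
          have hKlt : K < 2 := by exact_mod_cast h
          have hKe : K = 1 := by omega
          subst hKe
          push_cast at hA hB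
          linarith
        have hKm1 : (0:ℝ) < (K:ℝ) - 1 := by linarith
        set c : ℝ := ((K:ℝ)*r - ((N:ℝ)-1)/N)/((K:ℝ)-1) with hc
        have hc0 : 0 ≤ c := by
          apply div_nonneg _ (le_of_lt hKm1)
          rw [sub_nonneg, div_le_iff₀ hNpos]
          nlinarith
        have hc1 : c ≤ 1 := by
          rw [div_le_one hKm1]
          have hKr : (K:ℝ)*r ≤ (K:ℝ) - 1/N := by nlinarith [hNN]
          have heq : 1/(N:ℝ) + ((N:ℝ)-1)/N = 1 := by field_simp; ring
          linarith
        have hsum1 : (∑ k ∈ Finset.univ.erase L, (if k = L then (1:ℝ) else c)) = ((K:ℝ)-1) * c := by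
          rw [Finset.sum_congr rfl (fun k hk => if_neg (Finset.ne_of_mem_erase hk)),
            Finset.sum_const, nsmul_eq_mul, hcard]
        have hcv : ((K:ℝ)-1) * c = (K:ℝ)*r - ((N:ℝ)-1)/N := by
          rw [hc]; field_simp
        refine ⟨fun k => if k = L then 1 else c, ?_, ?_, ?_⟩
        · intro k; by_cases h : k = L <;> simp [h, hc0, hc1]
        · have h3 : (fun k => if k = L then (1:ℝ) else c) L = 1 := if_pos rfl
          rw [hsum1, h3, hcv]
          have : (N:ℝ) * ((K:ℝ)*r - ((N:ℝ)-1)/N) = (N:ℝ)*K*r - ((N:ℝ)-1) := by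
            field_simp
          rw [this]; ring_nf
          exact le_of_eq rfl
        · have h2 : (∑ k, (if k = L then (1:ℝ) else c)) = ((K:ℝ)-1)*c + 1 := by
            rw [← Finset.sum_erase_add _ _ (mem_univ L), hsum1, if_pos rfl]
          rw [h2, hcv]
          have hab : (K : ℝ) * (1 - r) - (K:ℝ)*r/((N:ℝ)-1) ≤ (K : ℝ) * (1 - r) - 1 / N := by
            have : 1/(N:ℝ) ≤ (K:ℝ)*r/((N:ℝ)-1) := by
              rw [div_le_div_iff₀ hNpos hN1]
              nlinarith
            linarith
          have h0a : (0:ℝ) ≤ (K : ℝ) * (1 - r) - 1/N := by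
            rw [sub_nonneg, div_le_iff₀ hNpos]
            nlinarith
          rw [max_eq_left hab, max_eq_right h0a]
          field_simp
          ring
      · -- case C : all ones
        refine ⟨fun _ => 1, ?_, ?_, ?_⟩
        · intro k; norm_num
        · simp only [Finset.sum_const, nsmul_eq_mul, hcard, mul_one]
          nlinarith
        · simp only [Finset.sum_const, nsmul_eq_mul, Finset.card_univ, Fintype.card_fin, mul_one]
          have h1 : (K : ℝ) * (1 - r) - 1/N ≤ 0 := by
            rw [sub_nonpos, le_div_iff₀ hNpos]
            nlinarith
          have h2 : (K : ℝ) * (1 - r) - (K:ℝ)*r/((N:ℝ)-1) ≤ 0 := by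
            rw [sub_nonpos, le_div_iff₀ hN1]
            nlinarith
          rw [max_eq_left (max_le h1 h2)]
          simp
  · -- lower bound
    rintro x ⟨v, hv, hcon, rfl⟩
    set S : ℝ := ∑ k ∈ Finset.univ.erase L, v k with hS
    have hS0 : 0 ≤ S := Finset.sum_nonneg (fun k _ => (hv k).1)
    have hsum : S + v L = ∑ k, v k := Finset.sum_erase_add _ _ (mem_univ L)
    have hvL0 := (hv L).1
    have hvL1 := (hv L).2
    have hTK : ∑ k, v k ≤ (K:ℝ) := by
      calc ∑ k, v k ≤ ∑ _k : Fin K, (1:ℝ) := Finset.sum_le_sum (fun k _ => (hv k).2)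
        _ = (K:ℝ) := by simp
    apply max_le
    · linarith
    apply max_le
    · have h1 : (N:ℝ) * (∑ k, v k) ≤ (N:ℝ)*K*r + 1 := by
        rw [← hsum]
        nlinarith
      nlinarith [hNN, hNpos]
    · have h3 : ((N:ℝ)-1) * (∑ k, v k) ≤ (N:ℝ)*K*r := by
        rw [← hsum]
        nlinarith
      have hMM : ((N:ℝ)-1) * ((K:ℝ)*r/((N:ℝ)-1)) = (K:ℝ)*r := by field_simp
      nlinarith [h3, hMM, hN1]
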